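/- Let F = x + F₂ + F₃ + F₄ with F₄ ≠ 0 and G = z + G₂ + ⋯ + G₆ with G₆ ≠ 0, where Fᵢ, Gᵢ ∈ ℂ[x,y,z] are homogeneous of degree i. If deg[F,G] < 10, then either (1) there exist a squarefree homogeneous polynomial H of degree 2 and α ∈ ℂ, α ≠ 0, such that F₄ = H² and G₆ = αH³, or (2) there exist a homogeneous polynomial h of degree 1 and α ∈ ℂ, α ≠ 0, such that F₄ = h⁴ and G₆ = αh⁶. -/

import Mathlib

open MvPolynomial

noncomputable def jacMinor (f g : MvPolynomial (Fin 3) ℂ) (i j : Fin 3) :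
    MvPolynomial (Fin 3) ℂ :=
  pderiv i f * pderiv j g - pderiv j f * pderiv i g

local notation "R" => MvPolynomial (Fin 3) ℂ



lemma degAdd (a b : Fin 3 →₀ ℕ) : (a + b).degree = a.degree + b.degree := by
  rw [Finsupp.degree_eq_weight_one]; exact map_add _ a b

lemma hc_mul_low {f g : R} {a b : ℕ}
    (hf : ∀ d, coeff d f ≠ 0 → a ≤ d.degree) (hg : ∀ d, coeff d g ≠ 0 → b ≤ d.degree) :
    homogeneousComponent (a + b) (f * g) = homogeneousComponent a f * homogeneousComponent b g := by
  ext d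
  rw [coeff_homogeneousComponent, coeff_mul, coeff_mul]
  by_cases hd : d.degree = a + b
  · rw [if_pos hd]
    refine Finset.sum_congr rfl fun x hx => ?_
    rw [Finset.HasAntidiagonal.mem_antidiagonal] at hx
    have hsum : x.1.degree + x.2.degree = a + b := by rw [← degAdd, hx, hd]
    rw [coeff_homogeneousComponent, coeff_homogeneousComponent]
    by_cases h1 : x.1.degree = a
    · have h2 : x.2.degree = b := by omega
      rw [if_pos h1, if_pos h2]
    · rw [if_neg h1]
      by_cases hcf : coeff x.1 f = 0
      · rw [hcf, zero_mul, zero_mul]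
      · have := hf _ hcf
        have h2 : x.2.degree < b := by omega
        have hcg : coeff x.2 g = 0 := by
          by_contra hcg; exact absurd (hg _ hcg) (by omega)
        rw [hcg, mul_zero, zero_mul]
  · rw [if_neg hd]
    refine (Finset.sum_eq_zero fun x hx => ?_).symm
    rw [Finset.HasAntidiagonal.mem_antidiagonal] at hx
    have hsum : x.1.degree + x.2.degree = d.degree := by rw [← degAdd, hx]
    rw [coeff_homogeneousComponent, coeff_homogeneousComponent]
    by_cases h1 : x.1.degree = a
    · by_cases h2 : x.2.degree = b
      · omega
      · rw [if_neg h2, mul_zero]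
    · rw [if_neg h1, zero_mul]

lemma hc_mul_high {f g : R} {a b : ℕ}
    (hf : ∀ d, coeff d f ≠ 0 → d.degree ≤ a) (hg : ∀ d, coeff d g ≠ 0 → d.degree ≤ b) :
    homogeneousComponent (a + b) (f * g) = homogeneousComponent a f * homogeneousComponent b g := by
  ext d
  rw [coeff_homogeneousComponent, coeff_mul, coeff_mul]
  by_cases hd : d.degree = a + b
  · rw [if_pos hd]
    refine Finset.sum_congr rfl fun x hx => ?_
    rw [Finset.HasAntidiagonal.mem_antidiagonal] at hx
    have hsum : x.1.degree + x.2.degree = a + b := by rw [← degAdd, hx, hd]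
    rw [coeff_homogeneousComponent, coeff_homogeneousComponent]
    by_cases h1 : x.1.degree = a
    · have h2 : x.2.degree = b := by omega
      rw [if_pos h1, if_pos h2]
    · rw [if_neg h1]
      by_cases hcf : coeff x.1 f = 0
      · rw [hcf, zero_mul, zero_mul]
      · have := hf _ hcf
        have h2 : b < x.2.degree := by omega
        have hcg : coeff x.2 g = 0 := by
          by_contra hcg; exact absurd (hg _ hcg) (by omega)
        rw [hcg, mul_zero, zero_mul]
  · rw [if_neg hd]
    refine (Finset.sum_eq_zero fun x hx => ?_).symm
    rw [Finset.HasAntidiagonal.mem_antidiagonal] at hx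
    have hsum : x.1.degree + x.2.degree = d.degree := by rw [← degAdd, hx]
    rw [coeff_homogeneousComponent, coeff_homogeneousComponent]
    by_cases h1 : x.1.degree = a
    · by_cases h2 : x.2.degree = b
      · omega
      · rw [if_neg h2, mul_zero]
    · rw [if_neg h1, zero_mul]

lemma exists_min_deg {f : R} (hf : f ≠ 0) :
    ∃ a, (∀ d, coeff d f ≠ 0 → a ≤ d.degree) ∧ homogeneousComponent a f ≠ 0 := by
  have hsupp : f.support.Nonempty := support_nonempty.2 hf
  have hS : (f.support.image Finsupp.degree).Nonempty := hsupp.image _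
  refine ⟨(f.support.image Finsupp.degree).min' hS, fun d hd => ?_, ?_⟩
  · exact Finset.min'_le _ _ (Finset.mem_image_of_mem _ (mem_support_iff.2 hd))
  · obtain ⟨d, hd, hdeg⟩ := Finset.mem_image.1 ((f.support.image Finsupp.degree).min'_mem hS)
    intro h0
    have : coeff d (homogeneousComponent ((f.support.image Finsupp.degree).min' hS) f) = 0 := by
      rw [h0]; rfl
    rw [coeff_homogeneousComponent, if_pos hdeg] at this
    exact mem_support_iff.1 hd this

lemma exists_max_deg {f : R} (hf : f ≠ 0) :
    ∃ a, (∀ d, coeff d f ≠ 0 → d.degree ≤ a) ∧ homogeneousComponent a f ≠ 0 := by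
  have hsupp : f.support.Nonempty := support_nonempty.2 hf
  have hS : (f.support.image Finsupp.degree).Nonempty := hsupp.image _
  refine ⟨(f.support.image Finsupp.degree).max' hS, fun d hd => ?_, ?_⟩
  · exact Finset.le_max' _ _ (Finset.mem_image_of_mem _ (mem_support_iff.2 hd))
  · obtain ⟨d, hd, hdeg⟩ := Finset.mem_image.1 ((f.support.image Finsupp.degree).max'_mem hS)
    intro h0
    have : coeff d (homogeneousComponent ((f.support.image Finsupp.degree).max' hS) f) = 0 := by
      rw [h0]; rfl
    rw [coeff_homogeneousComponent, if_pos hdeg] at this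
    exact mem_support_iff.1 hd this

lemma hc_of_ne {f : R} {n m : ℕ} (hf : f.IsHomogeneous n) (h : m ≠ n) :
    homogeneousComponent m f = 0 := by
  ext d
  rw [coeff_homogeneousComponent, coeff_zero]
  by_cases hd : d.degree = m
  · rw [if_pos hd]
    exact hf.coeff_eq_zero (by omega)
  · rw [if_neg hd]

lemma isHomog_of_deg {f : R} {n : ℕ} (h : ∀ d, coeff d f ≠ 0 → d.degree = n) :
    f.IsHomogeneous n := by
  intro d hd
  rw [show (Finsupp.weight 1 : (Fin 3 →₀ ℕ) →+ ℕ) = Finsupp.degree from Finsupp.degree_eq_weight_one.symm]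
  exact h d hd

lemma homog_of_mul {f g : R} (hf : f ≠ 0) (hg : g ≠ 0) {n : ℕ}
    (h : (f * g).IsHomogeneous n) :
    ∃ a b, a + b = n ∧ f.IsHomogeneous a ∧ g.IsHomogeneous b := by
  obtain ⟨a, ha, hane⟩ := exists_min_deg hf
  obtain ⟨A, hA, hAne⟩ := exists_max_deg hf
  obtain ⟨b, hb, hbne⟩ := exists_min_deg hg
  obtain ⟨B, hB, hBne⟩ := exists_max_deg hg
  have hab : a + b = n := by
    by_contra hne
    exact (mul_ne_zero hane hbne) (by rw [← hc_mul_low ha hb, hc_of_ne h hne])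
  have hAB : A + B = n := by
    by_contra hne
    exact (mul_ne_zero hAne hBne) (by rw [← hc_mul_high hA hB, hc_of_ne h hne])
  have haA : a ≤ A := by
    obtain ⟨d, hd⟩ := ne_zero_iff.1 hAne
    rw [coeff_homogeneousComponent] at hd
    by_cases hdd : d.degree = A
    · have : coeff d f ≠ 0 := by rwa [if_pos hdd] at hd
      have := ha d this; omega
    · rw [if_neg hdd] at hd; exact absurd rfl hd
  have hbB : b ≤ B := by
    obtain ⟨d, hd⟩ := ne_zero_iff.1 hBne
    rw [coeff_homogeneousComponent] at hd
    by_cases hdd : d.degree = B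
    · have : coeff d g ≠ 0 := by rwa [if_pos hdd] at hd
      have := hb d this; omega
    · rw [if_neg hdd] at hd; exact absurd rfl hd
  have haa : a = A := by omega
  have hbb : b = B := by omega
  refine ⟨a, b, hab, isHomog_of_deg fun d hd => ?_, isHomog_of_deg fun d hd => ?_⟩
  · have := ha d hd; have := hA d hd; omega
  · have := hb d hd; have := hB d hd; omega


lemma pderiv_isHomog {f : R} {n : ℕ} (hf : f.IsHomogeneous n) (i : Fin 3) :
    (pderiv i f).IsHomogeneous (n - 1) := by
  conv_lhs => rw [f.as_sum]
  rw [map_sum]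
  apply MvPolynomial.IsHomogeneous.sum
  intro d hd
  rw [pderiv_monomial]
  by_cases hdi : d i = 0
  · rw [hdi]; norm_num
    exact isHomogeneous_zero _ _ _
  · apply isHomogeneous_monomial
    have hdeg : d.degree = n := by
      have := hf (mem_support_iff.1 hd)
      rwa [show (Finsupp.weight 1 : (Fin 3 →₀ ℕ) →+ ℕ) = Finsupp.degree from Finsupp.degree_eq_weight_one.symm] at this
    have hle : Finsupp.single i 1 ≤ d := by
      rw [Finsupp.single_le_iff]; omega
    have : Finsupp.single i 1 + (d - Finsupp.single i 1) = d := add_tsub_cancel_of_le hle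
    have hd2 : (Finsupp.single i 1).degree + (d - Finsupp.single i 1).degree = n := by
      rw [← degAdd, this, hdeg]
    have hs : (Finsupp.single i 1).degree = 1 := by
      exact Finsupp.degree_single i 1
    omega

lemma euler3 {f : R} {n : ℕ} (hf : f.IsHomogeneous n) :
    ∑ i : Fin 3, X i * pderiv i f = C (n : ℂ) * f := by
  conv_lhs => rw [f.as_sum]
  conv_rhs => rw [f.as_sum]
  simp only [map_sum, Finset.mul_sum]
  rw [Finset.sum_comm]
  apply Finset.sum_congr rfl
  intro d hd
  have hdeg : d.degree = n := by
    have := hf (mem_support_iff.1 hd)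
    rwa [show (Finsupp.weight 1 : (Fin 3 →₀ ℕ) →+ ℕ) = Finsupp.degree from Finsupp.degree_eq_weight_one.symm] at this
  have hterm : ∀ i : Fin 3, X i * pderiv i (monomial d (coeff d f))
      = monomial d (coeff d f * (d i : ℂ)) := by
    intro i
    rw [pderiv_monomial]
    by_cases hdi : d i = 0
    · rw [hdi]; norm_num
    · rw [X, monomial_mul, one_mul]
      congr 1
      rw [add_tsub_cancel_of_le]
      rw [Finsupp.single_le_iff]; omega
  rw [Finset.sum_congr rfl fun i _ => hterm i, ← map_sum (monomial d), ← Finset.mul_sum]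
  have hsum : ∑ i : Fin 3, (d i : ℂ) = (n : ℂ) := by
    rw [← Nat.cast_sum]
    congr 1
    rw [← hdeg, Finsupp.degree]
    exact (Finset.sum_subset (Finset.subset_univ _) (fun x _ hx => by
      simpa using Finsupp.notMem_support_iff.1 hx)).symm
  rw [hsum, C_mul_monomial, mul_comm]


lemma eq_C_of_homog0 {f : R} (hf : f.IsHomogeneous 0) : f = C (coeff 0 f) := by
  ext d
  by_cases hd : d = 0
  · subst hd; simp
  · rw [coeff_C, if_neg (Ne.symm hd)]
    apply hf.coeff_eq_zero
    rw [Ne, Finsupp.degree_eq_zero_iff]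
    exact hd

lemma isUnit_eq_C {f : R} (h : IsUnit f) : ∃ c : ℂ, c ≠ 0 ∧ f = C c := by
  obtain ⟨u, rfl⟩ := h
  have hmul : (u : R) * (u⁻¹ : Rˣ) = 1 := u.mul_inv
  have hu : (u : R) ≠ 0 := u.ne_zero
  have hv : ((u⁻¹ : Rˣ) : R) ≠ 0 := Units.ne_zero _
  have h1 : ((u : R) * (u⁻¹ : Rˣ)).IsHomogeneous 0 := by rw [hmul]; exact isHomogeneous_one _ _
  obtain ⟨a, b, hab, hua, _⟩ := homog_of_mul hu hv h1
  have ha : a = 0 := by omega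
  subst ha
  refine ⟨coeff 0 (u : R), ?_, eq_C_of_homog0 hua⟩
  intro h0
  apply hu
  rw [eq_C_of_homog0 hua, h0, map_zero]


lemma const_of_rel {a b : R} (ha : a ≠ 0) (hb : b ≠ 0) {na : ℕ} (hha : a.IsHomogeneous na)
    (hrel : IsRelPrime a b) (hd : ∀ i, b * pderiv i a = a * pderiv i b) :
    ∃ u : ℂ, u ≠ 0 ∧ a = C u := by
  have hdvd : ∀ i, a ∣ pderiv i a := by
    intro i
    exact hrel.dvd_of_dvd_mul_left ⟨pderiv i b, hd i⟩
  rcases Nat.eq_zero_or_pos na with hna | hna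
  · subst hna
    refine ⟨coeff 0 a, fun h0 => ha ?_, eq_C_of_homog0 hha⟩
    rw [eq_C_of_homog0 hha, h0, map_zero]
  · exfalso
    have hCn : (C ((na : ℕ) : ℂ) : R) ≠ 0 := by
      simp only [ne_eq, map_eq_zero, Nat.cast_eq_zero]
      omega
    have hsum : ∑ i : Fin 3, X i * pderiv i a ≠ 0 := by
      rw [euler3 hha]
      exact mul_ne_zero hCn ha
    have hex : ∃ i, pderiv i a ≠ 0 := by
      by_contra hc
      push_neg at hc
      apply hsum
      refine Finset.sum_eq_zero fun i _ => by rw [hc i, mul_zero]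
    obtain ⟨i, hi⟩ := hex
    obtain ⟨q, hq⟩ := hdvd i
    have hqne : q ≠ 0 := by rintro rfl; rw [mul_zero] at hq; exact hi hq
    have hhom : (a * q).IsHomogeneous (na - 1) := hq ▸ pderiv_isHomog hha i
    obtain ⟨α, β, hαβ, hαa, _⟩ := homog_of_mul ha hqne hhom
    have : α = na := hαa.inj_right hha ha
    omega

lemma prop_const {A B : R} (hA : A ≠ 0) (hB : B ≠ 0) {m n : ℕ}
    (hmA : A.IsHomogeneous m) (hnB : B.IsHomogeneous n)
    (hd : ∀ i, B * pderiv i A = A * pderiv i B) :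
    ∃ c : ℂ, c ≠ 0 ∧ A = C c * B := by
  letI : NormalizationMonoid R := UniqueFactorizationMonoid.normalizationMonoid.toNormalizationMonoid
  letI : GCDMonoid R := UniqueFactorizationMonoid.toGCDMonoid _
  obtain ⟨a', b', hA', hB', hu⟩ := extract_gcd A B
  set K := gcd A B with hKdef
  clear_value K
  have hK : K ≠ 0 := fun h0 => hA (by rw [hA', h0, zero_mul])
  have ha' : a' ≠ 0 := fun h0 => hA (by rw [hA', h0, mul_zero])
  have hb' : b' ≠ 0 := fun h0 => hB (by rw [hB', h0, mul_zero])
  have hrel : IsRelPrime a' b' := fun d hda hdb => isUnit_of_dvd_unit (dvd_gcd hda hdb) hu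
  have hd2 : ∀ i, b' * pderiv i a' = a' * pderiv i b' := by
    intro i
    have h := hd i
    rw [hA', hB', pderiv_mul, pderiv_mul] at h
    have h2 : K ^ 2 * (b' * pderiv i a') = K ^ 2 * (a' * pderiv i b') := by
      linear_combination h
    exact mul_left_cancel₀ (pow_ne_zero 2 hK) h2
  obtain ⟨_, na, _, _, ha'h⟩ := homog_of_mul hK ha' (hA' ▸ hmA)
  obtain ⟨_, nb, _, _, hb'h⟩ := homog_of_mul hK hb' (hB' ▸ hnB)
  obtain ⟨u, hu0, hau⟩ := const_of_rel ha' hb' ha'h hrel hd2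
  obtain ⟨v, hv0, hbv⟩ := const_of_rel hb' ha' hb'h hrel.symm (fun i => (hd2 i).symm)
  refine ⟨v⁻¹ * u, mul_ne_zero (inv_ne_zero hv0) hu0, ?_⟩
  have key : C v * A = C u * B := by rw [hA', hB', hau, hbv]; ring
  calc A = C v⁻¹ * (C v * A) := by
        rw [← mul_assoc, ← map_mul, inv_mul_cancel₀ hv0, map_one, one_mul]
    _ = C v⁻¹ * (C u * B) := by rw [key]
    _ = C (v⁻¹ * u) * B := by rw [← mul_assoc, ← map_mul]

lemma jac_homog {p q : MvPolynomial (Fin 3) ℂ} {a b : ℕ}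
    (hp : p.IsHomogeneous a) (hq : q.IsHomogeneous b) (i j : Fin 3) :
    (jacMinor p q i j).IsHomogeneous (a - 1 + (b - 1)) :=
  ((pderiv_isHomog hp i).mul (pderiv_isHomog hq j)).sub
    ((pderiv_isHomog hp j).mul (pderiv_isHomog hq i))

theorem stmt3 (F2 F3 F4 G2 G3 G4 G5 G6 : MvPolynomial (Fin 3) ℂ)
    (hF2 : F2.IsHomogeneous 2) (hF3 : F3.IsHomogeneous 3) (hF4 : F4.IsHomogeneous 4)
    (hG2 : G2.IsHomogeneous 2) (hG3 : G3.IsHomogeneous 3) (hG4 : G4.IsHomogeneous 4)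
    (hG5 : G5.IsHomogeneous 5) (hG6 : G6.IsHomogeneous 6)
    (hF4n : F4 ≠ 0) (hG6n : G6 ≠ 0)
    (hbr : ∀ i j : Fin 3, (jacMinor (X 0 + F2 + F3 + F4) (X 2 + G2 + G3 + G4 + G5 + G6) i j).totalDegree < 8) :
    (∃ (H : MvPolynomial (Fin 3) ℂ) (α : ℂ), α ≠ 0 ∧ Squarefree H ∧ H.IsHomogeneous 2 ∧
      F4 = H ^ 2 ∧ G6 = C α * H ^ 3) ∨
    (∃ (h : MvPolynomial (Fin 3) ℂ) (α : ℂ), α ≠ 0 ∧ h.IsHomogeneous 1 ∧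
      F4 = h ^ 4 ∧ G6 = C α * h ^ 6) := by
  have hM : ∀ i j : Fin 3, jacMinor F4 G6 i j = 0 := by
    intro i j
    have h0 : homogeneousComponent 8
        (jacMinor (X 0 + F2 + F3 + F4) (X 2 + G2 + G3 + G4 + G5 + G6) i j) = 0 :=
      homogeneousComponent_eq_zero _ _ (hbr i j)
    have hexp : jacMinor (X 0 + F2 + F3 + F4) (X 2 + G2 + G3 + G4 + G5 + G6) i j =
        jacMinor (X 0) (X 2) i j +
        jacMinor (X 0) (G2) i j +
        jacMinor (X 0) (G3) i j +
        jacMinor (X 0) (G4) i j +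
        jacMinor (X 0) (G5) i j +
        jacMinor (X 0) (G6) i j +
        jacMinor (F2) (X 2) i j +
        jacMinor (F2) (G2) i j +
        jacMinor (F2) (G3) i j +
        jacMinor (F2) (G4) i j +
        jacMinor (F2) (G5) i j +
        jacMinor (F2) (G6) i j +
        jacMinor (F3) (X 2) i j +
        jacMinor (F3) (G2) i j +
        jacMinor (F3) (G3) i j +
        jacMinor (F3) (G4) i j +
        jacMinor (F3) (G5) i j +
        jacMinor (F3) (G6) i j +
        jacMinor (F4) (X 2) i j +
        jacMinor (F4) (G2) i j +
        jacMinor (F4) (G3) i j +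
        jacMinor (F4) (G4) i j +
        jacMinor (F4) (G5) i j +
        jacMinor (F4) (G6) i j := by
      simp only [jacMinor, map_add]; ring
    have k00 : homogeneousComponent 8 (jacMinor (X 0) (X 2) i j) = 0 :=
      hc_of_ne (jac_homog (isHomogeneous_X _ _) (isHomogeneous_X _ _) i j) (by norm_num)
    have k01 : homogeneousComponent 8 (jacMinor (X 0) (G2) i j) = 0 :=
      hc_of_ne (jac_homog (isHomogeneous_X _ _) hG2 i j) (by norm_num)
    have k02 : homogeneousComponent 8 (jacMinor (X 0) (G3) i j) = 0 :=
      hc_of_ne (jac_homog (isHomogeneous_X _ _) hG3 i j) (by norm_num)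
    have k03 : homogeneousComponent 8 (jacMinor (X 0) (G4) i j) = 0 :=
      hc_of_ne (jac_homog (isHomogeneous_X _ _) hG4 i j) (by norm_num)
    have k04 : homogeneousComponent 8 (jacMinor (X 0) (G5) i j) = 0 :=
      hc_of_ne (jac_homog (isHomogeneous_X _ _) hG5 i j) (by norm_num)
    have k05 : homogeneousComponent 8 (jacMinor (X 0) (G6) i j) = 0 :=
      hc_of_ne (jac_homog (isHomogeneous_X _ _) hG6 i j) (by norm_num)
    have k10 : homogeneousComponent 8 (jacMinor (F2) (X 2) i j) = 0 :=
      hc_of_ne (jac_homog hF2 (isHomogeneous_X _ _) i j) (by norm_num)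
    have k11 : homogeneousComponent 8 (jacMinor (F2) (G2) i j) = 0 :=
      hc_of_ne (jac_homog hF2 hG2 i j) (by norm_num)
    have k12 : homogeneousComponent 8 (jacMinor (F2) (G3) i j) = 0 :=
      hc_of_ne (jac_homog hF2 hG3 i j) (by norm_num)
    have k13 : homogeneousComponent 8 (jacMinor (F2) (G4) i j) = 0 :=
      hc_of_ne (jac_homog hF2 hG4 i j) (by norm_num)
    have k14 : homogeneousComponent 8 (jacMinor (F2) (G5) i j) = 0 :=
      hc_of_ne (jac_homog hF2 hG5 i j) (by norm_num)
    have k15 : homogeneousComponent 8 (jacMinor (F2) (G6) i j) = 0 :=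
      hc_of_ne (jac_homog hF2 hG6 i j) (by norm_num)
    have k20 : homogeneousComponent 8 (jacMinor (F3) (X 2) i j) = 0 :=
      hc_of_ne (jac_homog hF3 (isHomogeneous_X _ _) i j) (by norm_num)
    have k21 : homogeneousComponent 8 (jacMinor (F3) (G2) i j) = 0 :=
      hc_of_ne (jac_homog hF3 hG2 i j) (by norm_num)
    have k22 : homogeneousComponent 8 (jacMinor (F3) (G3) i j) = 0 :=
      hc_of_ne (jac_homog hF3 hG3 i j) (by norm_num)
    have k23 : homogeneousComponent 8 (jacMinor (F3) (G4) i j) = 0 :=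
      hc_of_ne (jac_homog hF3 hG4 i j) (by norm_num)
    have k24 : homogeneousComponent 8 (jacMinor (F3) (G5) i j) = 0 :=
      hc_of_ne (jac_homog hF3 hG5 i j) (by norm_num)
    have k25 : homogeneousComponent 8 (jacMinor (F3) (G6) i j) = 0 :=
      hc_of_ne (jac_homog hF3 hG6 i j) (by norm_num)
    have k30 : homogeneousComponent 8 (jacMinor (F4) (X 2) i j) = 0 :=
      hc_of_ne (jac_homog hF4 (isHomogeneous_X _ _) i j) (by norm_num)
    have k31 : homogeneousComponent 8 (jacMinor (F4) (G2) i j) = 0 :=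
      hc_of_ne (jac_homog hF4 hG2 i j) (by norm_num)
    have k32 : homogeneousComponent 8 (jacMinor (F4) (G3) i j) = 0 :=
      hc_of_ne (jac_homog hF4 hG3 i j) (by norm_num)
    have k33 : homogeneousComponent 8 (jacMinor (F4) (G4) i j) = 0 :=
      hc_of_ne (jac_homog hF4 hG4 i j) (by norm_num)
    have k34 : homogeneousComponent 8 (jacMinor (F4) (G5) i j) = 0 :=
      hc_of_ne (jac_homog hF4 hG5 i j) (by norm_num)
    have kmain : homogeneousComponent 8 (jacMinor F4 G6 i j) = jacMinor F4 G6 i j :=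
      (homogeneousComponent_of_mem ((mem_homogeneousSubmodule _ _).2
        (jac_homog hF4 hG6 i j))).trans (by norm_num)
    rw [hexp] at h0
    simp only [map_add, k00, k01, k02, k03, k04, k05, k10, k11, k12, k13, k14, k15, k20, k21, k22, k23, k24, k25, k30, k31, k32, k33, k34, kmain, zero_add, add_zero] at h0
    exact h0
  -- Step B: Euler consequence
  have hP : ∀ i : Fin 3, (3 : MvPolynomial (Fin 3) ℂ) * G6 * pderiv i F4
      = (2 : MvPolynomial (Fin 3) ℂ) * F4 * pderiv i G6 := by
    intro i
    have e1 : X 0 * pderiv 0 G6 + X 1 * pderiv 1 G6 + X 2 * pderiv 2 G6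
        = (6 : MvPolynomial (Fin 3) ℂ) * G6 := by
      have h := euler3 hG6
      rw [Fin.sum_univ_three] at h
      simpa [map_ofNat] using h
    have e2 : X 0 * pderiv 0 F4 + X 1 * pderiv 1 F4 + X 2 * pderiv 2 F4
        = (4 : MvPolynomial (Fin 3) ℂ) * F4 := by
      have h := euler3 hF4
      rw [Fin.sum_univ_three] at h
      simpa [map_ofNat] using h
    have hz : ∀ j : Fin 3, pderiv i F4 * pderiv j G6 - pderiv j F4 * pderiv i G6 = 0 :=
      fun j => hM i j
    have h6 : (6 : MvPolynomial (Fin 3) ℂ) * G6 * pderiv i F4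
        = (4 : MvPolynomial (Fin 3) ℂ) * F4 * pderiv i G6 := by
      linear_combination (pderiv i G6) * e2 - (pderiv i F4) * e1 + X 0 * hz 0 +
        X 1 * hz 1 + X 2 * hz 2
    have h2 : (2 : MvPolynomial (Fin 3) ℂ) * ((3 : MvPolynomial (Fin 3) ℂ) * G6 * pderiv i F4)
        = (2 : MvPolynomial (Fin 3) ℂ) * ((2 : MvPolynomial (Fin 3) ℂ) * F4 * pderiv i G6) := by
      linear_combination h6
    exact mul_left_cancel₀ two_ne_zero h2
  -- Step C: derivative proportionality for the powers
  have hAB : ∀ i : Fin 3, G6 ^ 2 * pderiv i (F4 ^ 3) = F4 ^ 3 * pderiv i (G6 ^ 2) := by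
    intro i
    rw [pderiv_pow, pderiv_pow]
    norm_num
    linear_combination (F4 ^ 2 * G6) * hP i
  -- Step D: F4^3 = c * G6^2
  have hA3 : (F4 ^ 3) ≠ 0 := pow_ne_zero _ hF4n
  have hB2 : (G6 ^ 2) ≠ 0 := pow_ne_zero _ hG6n
  obtain ⟨c, hc0, hcEq⟩ := prop_const hA3 hB2 (hF4.pow 3) (hG6.pow 2) hAB
  -- Step E: gcd argument
  letI : NormalizationMonoid (MvPolynomial (Fin 3) ℂ) :=
    UniqueFactorizationMonoid.normalizationMonoid.toNormalizationMonoid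
  letI : GCDMonoid (MvPolynomial (Fin 3) ℂ) := UniqueFactorizationMonoid.toGCDMonoid _
  obtain ⟨f, g, hF', hG', hugcd⟩ := extract_gcd F4 G6
  set K := gcd F4 G6 with hKdef
  clear_value K
  have hK0 : K ≠ 0 := fun h0 => hF4n (by rw [hF', h0, zero_mul])
  have hf0 : f ≠ 0 := fun h0 => hF4n (by rw [hF', h0, mul_zero])
  have hg0 : g ≠ 0 := fun h0 => hG6n (by rw [hG', h0, mul_zero])
  have hrel : IsRelPrime f g := fun d hda hdb => isUnit_of_dvd_unit (dvd_gcd hda hdb) hugcd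
  have hKf : K * f ^ 3 = C c * g ^ 2 := by
    have h2 : K ^ 2 * (K * f ^ 3) = K ^ 2 * (C c * g ^ 2) := by
      have := hcEq
      rw [hF', hG'] at this
      linear_combination this
    exact mul_left_cancel₀ (pow_ne_zero 2 hK0) h2
  have hgK : g ^ 2 ∣ K := by
    have hdvd : g ^ 2 ∣ K * f ^ 3 := ⟨C c, by rw [hKf]; ring⟩
    exact ((hrel.symm.pow_left (m := 2)).pow_right (n := 3)).dvd_of_dvd_mul_right hdvd
  obtain ⟨t, ht⟩ := hgK
  have ht0 : t ≠ 0 := fun h0 => hK0 (by rw [ht, h0, mul_zero])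
  have htf : t * f ^ 3 = C c := by
    have h2 : g ^ 2 * (t * f ^ 3) = g ^ 2 * C c := by
      rw [ht] at hKf
      linear_combination hKf
    exact mul_left_cancel₀ (pow_ne_zero 2 hg0) h2
  have hunit : IsUnit (t * f ^ 3) := htf ▸ (isUnit_iff_ne_zero.2 hc0).map (C : ℂ →+* _)
  obtain ⟨et, het0, hetC⟩ := isUnit_eq_C (isUnit_of_mul_isUnit_left hunit)
  have hfunit : IsUnit (f ^ 3) := isUnit_of_mul_isUnit_right hunit
  obtain ⟨ef, hef0, hefC⟩ := isUnit_eq_C ((isUnit_pow_iff (by norm_num)).1 hfunit)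
  -- F4 = C (et * ef) * g ^ 2, G6 = C et * g ^ 3
  have hF4eq : F4 = C (et * ef) * g ^ 2 := by
    rw [hF', ht, hetC, hefC, map_mul]; ring
  have hG6eq : G6 = C et * g ^ 3 := by
    rw [hG', ht, hetC]; ring
  have hetef0 : et * ef ≠ 0 := mul_ne_zero het0 hef0
  -- g is homogeneous of degree 2
  have hg3hom : (g * g ^ 2).IsHomogeneous 6 := by
    have : g * g ^ 2 = C et⁻¹ * G6 := by
      rw [hG6eq, ← mul_assoc, ← map_mul, inv_mul_cancel₀ het0, map_one, one_mul]; ring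
    rw [this]
    exact hG6.C_mul _
  obtain ⟨a, b, hab, hga, hg2b⟩ := homog_of_mul hg0 (pow_ne_zero 2 hg0) hg3hom
  have hbb : b = 2 * a := by
    have h2a : (g ^ 2).IsHomogeneous (a + a) := by
      have := hga.mul hga
      rwa [← sq] at this
    have := h2a.inj_right hg2b (pow_ne_zero 2 hg0)
    omega
  have hga2 : g.IsHomogeneous 2 := by
    have : a = 2 := by omega
    rwa [this] at hga
  -- Case split on squarefreeness of g
  by_cases hsq : Squarefree g
  · left
    obtain ⟨s, hs⟩ := IsAlgClosed.exists_pow_nat_eq (et * ef) (n := 2) (by norm_num)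
    have hs0 : s ≠ 0 := by
      rintro rfl
      rw [zero_pow (by norm_num)] at hs
      exact hetef0 hs.symm
    refine ⟨C s * g, et / s ^ 3, ?_, ?_, hga2.C_mul _, ?_, ?_⟩
    · exact div_ne_zero het0 (pow_ne_zero _ hs0)
    · refine hsq.squarefree_of_dvd ⟨C s⁻¹, ?_⟩
      have h1 : (C s⁻¹ * C s : MvPolynomial (Fin 3) ℂ) = 1 := by
        rw [← map_mul, inv_mul_cancel₀ hs0, map_one]
      linear_combination (-g) * h1
    · rw [hF4eq, ← hs, mul_pow, ← map_pow]
    · rw [hG6eq, mul_pow, ← map_pow, ← mul_assoc, ← map_mul]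
      congr 1
      field_simp
  · right
    rw [Squarefree] at hsq
    push_neg at hsq
    obtain ⟨p, hpd, hpu⟩ := hsq
    have hp0 : p ≠ 0 := by
      rintro rfl
      rw [mul_zero, zero_dvd_iff] at hpd
      exact hg0 hpd
    obtain ⟨w, hw⟩ := hpd
    have hw0 : w ≠ 0 := fun h0 => hg0 (by rw [hw, h0, mul_zero])
    have hgw : ((p * p) * w).IsHomogeneous 2 := hw ▸ hga2
    obtain ⟨s1, e1, hse, hpp, hwh⟩ := homog_of_mul (mul_ne_zero hp0 hp0) hw0 hgw
    obtain ⟨d1, d2, hd12, hpd1, hpd2⟩ := homog_of_mul hp0 hp0 hpp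
    have hdd : d1 = d2 := hpd1.inj_right hpd2 hp0
    have hd1pos : 1 ≤ d1 := by
      rcases Nat.eq_zero_or_pos d1 with h0 | h1
      · exfalso
        apply hpu
        subst h0
        have := eq_C_of_homog0 hpd1
        have hcp0 : coeff 0 p ≠ 0 := fun hz => hp0 (by rw [this, hz, map_zero])
        rw [this]
        exact (isUnit_iff_ne_zero.2 hcp0).map (C : ℂ →+* _)
      · exact h1
    have hd1 : d1 = 1 := by omega
    have he1 : e1 = 0 := by omega
    have hwc : w = C (coeff 0 w) := eq_C_of_homog0 (he1 ▸ hwh)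
    set u0 := coeff 0 w with hu0def
    have hu00 : u0 ≠ 0 := fun hz => hw0 (by rw [hwc, hz, map_zero])
    obtain ⟨tt, htt⟩ := IsAlgClosed.exists_pow_nat_eq (et * ef * u0 ^ 2) (n := 4) (by norm_num)
    have htt0 : tt ≠ 0 := by
      rintro rfl
      rw [zero_pow (by norm_num)] at htt
      exact (mul_ne_zero hetef0 (pow_ne_zero _ hu00)) htt.symm
    have hphom : p.IsHomogeneous 1 := hd1 ▸ hpd1
    refine ⟨C tt * p, et * u0 ^ 3 / tt ^ 6, ?_, hphom.C_mul _, ?_, ?_⟩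
    · exact div_ne_zero (mul_ne_zero het0 (pow_ne_zero _ hu00)) (pow_ne_zero _ htt0)
    · have hF4p : F4 = C (et * ef * u0 ^ 2) * p ^ 4 := by
        have hCC : (C (et * ef * u0 ^ 2) : MvPolynomial (Fin 3) ℂ)
            = C (et * ef) * C u0 ^ 2 := by rw [map_mul, map_pow]
        rw [hF4eq, hw, hwc, hCC]; ring
      rw [mul_pow, ← map_pow, htt, hF4p]
    · have hG6p : G6 = C (et * u0 ^ 3) * p ^ 6 := by
        have hCC : (C (et * u0 ^ 3) : MvPolynomial (Fin 3) ℂ)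
            = C et * C u0 ^ 3 := by rw [map_mul, map_pow]
        rw [hG6eq, hw, hwc, hCC]; ring
      have hCC2 : (C (et * u0 ^ 3 / tt ^ 6) * (C tt * p) ^ 6 : MvPolynomial (Fin 3) ℂ)
          = C (et * u0 ^ 3 / tt ^ 6 * tt ^ 6) * p ^ 6 := by
        rw [mul_pow, ← map_pow, ← mul_assoc, ← map_mul]
      rw [hG6p, hCC2]
      congr 2
      field_simp
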